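/- Let f, g ∈ t·K⟦t⟧ be formal power series without constant term and let K = (K₁,…,K_r) be a composition of n. Then the product ∏_{s=1}^{r} [t^{K_s}](f ∘ g) equals the sum over x from 1 to n, over compositions J of x of length r, and over compositions I of n such that the composition J ∘ I (defined by grouping I into consecutive blocks of sizes J₁,…,J_r and summing each block) equals K, of (∏_{s=1}^{r} [t^{J_s}]f)·(∏_{a=1}^{x} [t^{I_a}]g). -/

import Mathlib

open PowerSeries Finset List

lemma prod_fin_eq_prod_map {α : Type*} {M : Type*} [CommMonoid M] (L : List α) (h : α → M) :
    ∏ i : Fin L.length, h (L.get i) = (L.map h).prod := by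
  rw [← List.prod_ofFn, ← List.ofFn_get (L.map h)]
  simp

lemma sum_fin_eq_sum {M : Type*} [AddCommMonoid M] (L : List ℕ) (h : ℕ → M) :
    ∑ i : Fin L.length, h (L.get i) = (L.map h).sum := by
  rw [← List.sum_ofFn, ← List.ofFn_get (L.map h)]
  simp

lemma comp_prod_blocksFun {M : Type*} [CommMonoid M] {n : ℕ} (c : Composition n) (h : ℕ → M) :
    ∏ i : Fin c.length, h (c.blocksFun i) = (c.blocks.map h).prod :=
  prod_fin_eq_prod_map c.blocks h

lemma lemF {M : Type*} [CommMonoid M] {n : ℕ} (a : Composition n) (b : Composition a.length)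
    (h : ℕ → M) :
    ∏ s : Fin (a.gather b).length, h ((a.sigmaCompositionAux b s).length) =
      ∏ s : Fin b.length, h (b.blocksFun s) := by
  set L := a.blocks.splitWrtComposition b with hL
  have hlen : (a.gather b).length = L.length := by
    simp [Composition.gather, Composition.length, hL]
  rw [comp_prod_blocksFun b h, ← map_length_splitWrtComposition a.blocks b, ← hL, List.map_map]
  rw [← prod_fin_eq_prod_map L (h ∘ List.length)]
  apply Fintype.prod_equiv (finCongr hlen)
  intro s
  rfl

lemma lemD {M : Type*} [CommMonoid M] {n : ℕ} (a : Composition n) (b : Composition a.length)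
    (h : ℕ → M) :
    ∏ s : Fin (a.gather b).length, ∏ i : Fin (a.sigmaCompositionAux b s).length,
        h ((a.sigmaCompositionAux b s).blocksFun i) =
      ∏ i : Fin a.length, h (a.blocksFun i) := by
  set L := a.blocks.splitWrtComposition b with hL
  have hlen : (a.gather b).length = L.length := by
    simp [Composition.gather, Composition.length, hL]
  rw [comp_prod_blocksFun a h, ← a.blocks.flatten_splitWrtComposition b, ← hL]
  rw [List.map_flatten, List.prod_flatten, List.map_map]
  rw [Finset.prod_congr rfl fun s _ => comp_prod_blocksFun (a.sigmaCompositionAux b s) h]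
  rw [← prod_fin_eq_prod_map L (prod ∘ List.map h)]
  apply Fintype.prod_equiv (finCongr hlen)
  intro s
  rfl

lemma coeff_pow_comp {R : Type*} [CommRing R] (g : PowerSeries R)
    (hg : PowerSeries.constantCoeff g = 0) (k j : ℕ) :
    PowerSeries.coeff k (g ^ j) =
      ∑ c : Composition k, if c.length = j then
        ∏ i : Fin c.length, PowerSeries.coeff (c.blocksFun i) g else 0 := by
  classical
  rw [PowerSeries.coeff_pow, ← Finset.sum_filter]
  rw [← Finset.sum_filter_add_sum_filter_not (Finset.finsuppAntidiag (range j) k)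
    (fun l => ∀ i ∈ Finset.range j, l i ≠ 0)]
  have h2 : ∑ l ∈ (Finset.finsuppAntidiag (range j) k).filter
      (fun l => ¬ ∀ i ∈ Finset.range j, l i ≠ 0),
      ∏ i ∈ range j, PowerSeries.coeff (l i) g = 0 := by
    apply Finset.sum_eq_zero
    intro l hl
    simp only [Finset.mem_filter, not_forall] at hl
    obtain ⟨i, hi, hli⟩ := hl.2
    simp only [ne_eq, not_not] at hli
    exact Finset.prod_eq_zero hi (by rw [hli, PowerSeries.coeff_zero_eq_constantCoeff, hg])
  rw [h2, add_zero]
  refine Finset.sum_bij' (i := fun l hl => (⟨List.ofFn fun i : Fin j => l i, ?_, ?_⟩ : Composition k))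
    (j := fun c hc => Finsupp.onFinset (range j) (fun i => c.blocks.getD i 0) ?_) ?_ ?_ ?_ ?_ ?_
  · intro m hm
    rw [List.mem_ofFn] at hm
    obtain ⟨i, rfl⟩ := hm
    have := (Finset.mem_filter.1 hl).2 i (Finset.mem_range.2 i.2)
    exact Nat.pos_of_ne_zero this
  · rw [List.sum_ofFn]
    have hl' := Finset.mem_finsuppAntidiag.1 (Finset.mem_filter.1 hl).1
    rw [Fin.sum_univ_eq_sum_range]
    exact hl'.1
  · intro i hi
    rw [Finset.mem_range]
    by_contra h
    push_neg at h
    refine hi (List.getD_eq_default _ _ ?_)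
    have hc' : c.length = j := (Finset.mem_filter.1 hc).2
    have : c.blocks.length = j := hc'
    omega
  · intro l hl
    simp only [Finset.mem_filter, Finset.mem_univ, true_and]
    simp [Composition.length]
  · intro c hc
    have hc' : c.length = j := (Finset.mem_filter.1 hc).2
    have hlen : c.blocks.length = j := hc'
    simp only [Finset.mem_filter, Finset.mem_finsuppAntidiag]
    refine ⟨⟨?_, Finsupp.support_onFinset_subset⟩, ?_⟩
    · change ∑ i ∈ range j, c.blocks.getD i 0 = k
      rw [← hlen, ← Fin.sum_univ_eq_sum_range]
      have : ∀ i : Fin c.blocks.length, (c.blocks.getD (i : ℕ) 0) = c.blocks.get i := by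
        intro i; rw [List.getD_eq_getElem _ _ i.2]; rfl
      simp only [this]
      rw [show (fun x : Fin c.blocks.length => c.blocks.get x) = fun x => _root_.id (c.blocks.get x) from rfl,
        sum_fin_eq_sum (L := c.blocks) (h := _root_.id), List.map_id]
      exact c.blocks_sum
    · intro i hi
      simp only [Finsupp.onFinset_apply]
      have hij : i < j := Finset.mem_range.1 hi
      rw [List.getD_eq_getElem _ _ (by omega)]
      exact (c.blocks_pos' i (by omega)).ne'
  · intro l hl
    ext i
    simp only [Finsupp.onFinset_apply]
    by_cases hij : i < j
    · rw [List.getD_eq_getElem _ _ (by simpa using hij)]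
      simp
    · rw [List.getD_eq_default _ _ (by simpa using hij)]
      have hsupp := (Finset.mem_finsuppAntidiag.1 (Finset.mem_filter.1 hl).1).2
      by_contra h
      exact hij (Finset.mem_range.1 (hsupp (Finsupp.mem_support_iff.2 (Ne.symm h))))
  · intro c hc
    have hc' : c.length = j := (Finset.mem_filter.1 hc).2
    have hlen : c.blocks.length = j := hc'
    apply Composition.ext
    apply List.ext_getElem
    · simp [hlen]
    · intro i h1 h2
      simp only [List.getElem_ofFn, Finsupp.onFinset_apply]
      rw [List.getD_eq_getElem _ _ h2]
  · intro l hl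
    rw [← Fin.prod_univ_eq_prod_range (fun i => PowerSeries.coeff (l i) g) j]
    apply Fintype.prod_equiv (finCongr (by simp [Composition.length]))
    intro i
    congr 1
    simp [Composition.blocksFun, Composition.length]



/-- Composition (substitution) `f ∘ g` of formal power series, for `g` with zero constant
term. -/
noncomputable def psComp {K : Type*} [CommRing K] (f g : PowerSeries K) : PowerSeries K :=
  PowerSeries.mk fun k =>
    PowerSeries.coeff k (∑ j ∈ Finset.range (k + 1), (PowerSeries.coeff j f) • g ^ j)


lemma coeff_psComp {R : Type*} [CommRing R] (f g : PowerSeries R)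
    (hg : PowerSeries.constantCoeff g = 0) (k : ℕ) :
    PowerSeries.coeff k (psComp f g) =
      ∑ c : Composition k, PowerSeries.coeff c.length f *
        ∏ i : Fin c.length, PowerSeries.coeff (c.blocksFun i) g := by
  classical
  rw [psComp, PowerSeries.coeff_mk, map_sum]
  simp only [map_smul, smul_eq_mul]
  rw [Finset.sum_congr rfl fun j _ => by rw [coeff_pow_comp g hg k j]]
  rw [Finset.sum_congr rfl fun j (_ : j ∈ Finset.range (k+1)) => Finset.mul_sum _ _ _]
  rw [Finset.sum_comm]
  apply Finset.sum_congr rfl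
  intro c _
  simp only [mul_ite, mul_zero]
  rw [Finset.sum_ite_eq (Finset.range (k+1)) c.length
    (fun j => PowerSeries.coeff j f * ∏ i : Fin c.length, PowerSeries.coeff (c.blocksFun i) g)]
  rw [if_pos (Finset.mem_range.2 (Nat.lt_succ_of_le c.length_le))]


/-- for `f, g ∈ t·K⟦t⟧` and a composition `K = (K₁,…,K_r)` of `n`,
`∏_{s} [t^{K_s}](f ∘ g)` equals the sum over `1 ≤ x ≤ n`, over compositions `J` of `x`
with `len(J) = r`, and over compositions `I` of `n` with `len(I) = x` and `J ∘ I = K`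
(grouping the parts of `I` into consecutive blocks of sizes `J₁,…,J_r` and summing), of
`(∏_s [t^{J_s}]f) · (∏_a [t^{I_a}]g)`. -/
theorem prod_coeff_psComp {R : Type*} [CommRing R] (f g : PowerSeries R)
    (hf : PowerSeries.constantCoeff f = 0) (hg : PowerSeries.constantCoeff g = 0)
    (n : ℕ) (hn : 0 < n) (Kc : Composition n) :
    ∏ s : Fin Kc.length, PowerSeries.coeff (Kc.blocksFun s) (psComp f g) =
      ∑ x ∈ Finset.Icc 1 n, ∑ J : Composition x, ∑ I : Composition n,
        if J.length = Kc.length ∧ I.length = x ∧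
            (I.blocks.splitWrtComposition J).map List.sum = Kc.blocks then
          (∏ s : Fin J.length, PowerSeries.coeff (J.blocksFun s) f) *
            (∏ a : Fin I.length, PowerSeries.coeff (I.blocksFun a) g)
        else 0 := by
  classical
  set H : (Σ a : Composition n, Composition a.length) → R := fun p =>
    if p.1.gather p.2 = Kc then
      (∏ s : Fin p.2.length, PowerSeries.coeff (p.2.blocksFun s) f) *
        ∏ i : Fin p.1.length, PowerSeries.coeff (p.1.blocksFun i) g
    else 0 with hHdef
  set G : (Σ c : Composition n, ∀ i : Fin c.length, Composition (c.blocksFun i)) → R := fun q =>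
    if q.1 = Kc then
      ∏ s : Fin q.1.length, (PowerSeries.coeff (q.2 s).length f *
        ∏ i : Fin (q.2 s).length, PowerSeries.coeff ((q.2 s).blocksFun i) g)
    else 0 with hGdef
  have hHG : ∀ p, H p = G (Composition.sigmaEquivSigmaPi n p) := by
    rintro ⟨a, b⟩
    show H ⟨a, b⟩ = G ⟨a.gather b, a.sigmaCompositionAux b⟩
    rw [hHdef, hGdef]
    simp only
    refine if_congr Iff.rfl ?_ rfl
    rw [Finset.prod_mul_distrib,
      lemF a b (fun m => PowerSeries.coeff m f),
      lemD a b (fun m => PowerSeries.coeff m g)]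
  have hM : (∑ p : (Σ a : Composition n, Composition a.length), H p) =
      ∑ τ ∈ Fintype.piFinset (fun s : Fin Kc.length => (Finset.univ : Finset (Composition (Kc.blocksFun s)))),
        ∏ s, (PowerSeries.coeff (τ s).length f *
          ∏ i : Fin (τ s).length, PowerSeries.coeff ((τ s).blocksFun i) g) := by
    rw [Finset.sum_congr rfl fun p _ => hHG p,
      Equiv.sum_comp (Composition.sigmaEquivSigmaPi n) G,
      ← Finset.univ_sigma_univ, Finset.sum_sigma]
    have h1 : ∀ c : Composition n,
        (∑ τ : (∀ i : Fin c.length, Composition (c.blocksFun i)), G ⟨c, τ⟩) =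
        if c = Kc then
          (∑ τ : (∀ i : Fin c.length, Composition (c.blocksFun i)),
            ∏ s, (PowerSeries.coeff (τ s).length f *
              ∏ i : Fin (τ s).length, PowerSeries.coeff ((τ s).blocksFun i) g))
        else 0 := by
      intro c
      by_cases hc : c = Kc <;> simp [hGdef, hc]
    rw [Finset.sum_congr rfl fun c _ => h1 c]
    rw [Finset.sum_ite_eq' Finset.univ Kc, if_pos (Finset.mem_univ _), Fintype.piFinset_univ]
  have hR : (∑ x ∈ Finset.Icc 1 n, ∑ J : Composition x, ∑ I : Composition n,
      if J.length = Kc.length ∧ I.length = x ∧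
          (I.blocks.splitWrtComposition J).map List.sum = Kc.blocks then
        (∏ s : Fin J.length, PowerSeries.coeff (J.blocksFun s) f) *
          (∏ a : Fin I.length, PowerSeries.coeff (I.blocksFun a) g)
      else 0) = ∑ p : (Σ a : Composition n, Composition a.length), H p := by
    rw [← Finset.univ_sigma_univ, Finset.sum_sigma]
    rw [Finset.sum_congr rfl fun x _ => Finset.sum_comm, Finset.sum_comm]
    apply Finset.sum_congr rfl
    intro I _
    rw [Finset.sum_eq_single I.length]
    · apply Finset.sum_congr rfl
      intro J _
      rw [hHdef]
      simp only
      refine if_congr ?_ rfl rfl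
      constructor
      · rintro ⟨h1, -, h3⟩
        exact Composition.ext h3
      · intro hgather
        refine ⟨?_, by trivial, ?_⟩
        · rw [← hgather]
          exact (Composition.length_gather I J).symm
        · rw [← hgather]
          rfl
    · intro x _ hxne
      apply Finset.sum_eq_zero
      intro J _
      rw [if_neg]
      rintro ⟨-, h, -⟩
      exact hxne h.symm
    · intro habs
      exact absurd (Finset.mem_Icc.2 ⟨I.length_pos_of_pos hn, I.length_le⟩) habs
  rw [hR, hM]
  rw [Finset.prod_congr rfl fun s _ => coeff_psComp f g hg (Kc.blocksFun s)]
  exact Finset.prod_univ_sum _ _
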